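/- Let α ⊨ n and τ_1 ∈ SRCT(α), and suppose i ∈ des(τ_1) is a non-attacking descent, so that τ_2 = π_i(τ_1) = s_i(τ_1) is an SRCT. Then ℓ(col_{τ_2}) = ℓ(col_{τ_1}) + 1, and col_{τ_1} ≤_L col_{τ_2} in the left weak Bruhat order on the symmetric group S_n. -/

import Mathlib

/-- Cell `(r,c)` (0-indexed: row `r` from the top, column `c` from the left) of the
reverse composition diagram of the composition `α`. -/
def IsCell (α : List ℕ) (r c : ℕ) : Prop := r < α.length ∧ c < α.getD r 0

instance (α : List ℕ) (r c : ℕ) : Decidable (IsCell α r c) :=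
  inferInstanceAs (Decidable (r < α.length ∧ c < α.getD r 0))

/-- A standard reverse composition tableau (SRCT) of shape `α`: a bijective filling of the
reverse composition diagram of `α` by `{1,…,α.sum}` (with the junk value `0` off the diagram)
whose rows decrease from left to right, whose first column increases from top to bottom,
and which satisfies the triple rule. -/
structure SRCT (α : List ℕ) where
  entry : ℕ → ℕ → ℕ
  zero_off : ∀ r c, ¬ IsCell α r c → entry r c = 0
  one_le : ∀ r c, IsCell α r c → 1 ≤ entry r c
  le_sum : ∀ r c, IsCell α r c → entry r c ≤ α.sum
  inj : ∀ r c r' c', IsCell α r c → IsCell α r' c' → entry r c = entry r' c' → r = r' ∧ c = c'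
  surj : ∀ m, 1 ≤ m → m ≤ α.sum → ∃ r c, IsCell α r c ∧ entry r c = m
  row_dec : ∀ r c, IsCell α r (c + 1) → entry r (c + 1) < entry r c
  col1_inc : ∀ r r', r < r' → IsCell α r 0 → IsCell α r' 0 → entry r 0 < entry r' 0
  triple : ∀ r r' c, r < r' → IsCell α r c → IsCell α r' (c + 1) →
    entry r' (c + 1) < entry r c → IsCell α r (c + 1) ∧ entry r' (c + 1) < entry r (c + 1)

/-- `i` is a descent of `T`: `i+1` appears weakly right of `i`. -/
def Descent (α : List ℕ) (T : SRCT α) (i : ℕ) : Prop :=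
  ∃ r c r' c', IsCell α r c ∧ IsCell α r' c' ∧
    T.entry r c = i ∧ T.entry r' c' = i + 1 ∧ c ≤ c'

/-- `i` and `i+1` are attacking in `T`: same column, or adjacent columns with `i+1`
strictly southeast of `i`. -/
def Attacking (α : List ℕ) (T : SRCT α) (i : ℕ) : Prop :=
  ∃ r c r' c', IsCell α r c ∧ IsCell α r' c' ∧
    T.entry r c = i ∧ T.entry r' c' = i + 1 ∧ (c' = c ∨ (c' = c + 1 ∧ r < r'))

/-- The entry function of the filling `s_i(T)` obtained from `T` by interchanging the
positions of the entries `i` and `i+1`. -/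
def swapEntry (α : List ℕ) (T : SRCT α) (i : ℕ) : ℕ → ℕ → ℕ := fun r c =>
  if T.entry r c = i then i + 1 else if T.entry r c = i + 1 then i else T.entry r c

def maxPart (α : List ℕ) : ℕ := α.foldr max 0

/-- The entries of column `c` of `T`, read from top to bottom. -/
def colList (α : List ℕ) (T : SRCT α) (c : ℕ) : List ℕ :=
  (List.range α.length).filterMap fun r => if IsCell α r c then some (T.entry r c) else none

/-- The column word of `T`: entries of each column read top to bottom, columns left to right,
viewed as a permutation of `{1,…,n}` in one-line notation. -/
def colWord (α : List ℕ) (T : SRCT α) : List ℕ :=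
  (List.range (maxPart α)).flatMap fun c => colList α T c

/-- The inversion set of a one-line word: pairs of positions `p < q` with `w_p > w_q`. -/
def invFinset (w : List ℕ) : Finset (ℕ × ℕ) :=
  (Finset.range w.length ×ˢ Finset.range w.length).filter fun pq =>
    pq.1 < pq.2 ∧ w.getD pq.2 0 < w.getD pq.1 0

/-- The number of inversions, i.e. the Coxeter length of the one-line word. -/
def invCount (w : List ℕ) : ℕ := (invFinset w).card

private def swapFn (i : ℕ) (x : ℕ) : ℕ := if x = i then i + 1 else if x = i + 1 then i else x

private lemma mem_colList_iff {α : List ℕ} {T : SRCT α} {c x : ℕ} :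
    x ∈ colList α T c ↔ ∃ r, IsCell α r c ∧ T.entry r c = x := by
  simp only [colList, List.mem_filterMap, List.mem_range]
  constructor
  · rintro ⟨r, hr, h⟩
    split_ifs at h with hc
    exact ⟨r, hc, Option.some.inj h⟩
  · rintro ⟨r, hcell, he⟩
    exact ⟨r, hcell.1, by simp [hcell, he]⟩

private lemma nodup_colList {α : List ℕ} {T : SRCT α} {c : ℕ} : (colList α T c).Nodup := by
  refine List.Nodup.filterMap ?_ List.nodup_range
  intro a a' b hb hb'
  simp only [Option.mem_def] at hb hb'
  split_ifs at hb hb' with h1 h2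
  exact ((T.inj a c a' c h1 h2 ((Option.some.inj hb).trans (Option.some.inj hb').symm))).1

private lemma nodup_colWord {α : List ℕ} {T : SRCT α} : (colWord α T).Nodup := by
  rw [colWord, List.nodup_flatMap]
  refine ⟨fun _ _ => nodup_colList, ?_⟩
  rw [List.pairwise_iff_getElem]
  intro a b ha hb hab
  intro x hx hx'
  simp only [Function.onFun] at *
  rw [mem_colList_iff] at hx hx'
  obtain ⟨r, hc, he⟩ := hx
  obtain ⟨r', hc', he'⟩ := hx'
  have := (T.inj r _ r' _ hc hc' (he.trans he'.symm)).2
  simp only [List.getElem_range] at this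
  omega

private lemma colWord_swap {α : List ℕ} {T1 T2 : SRCT α} {i : ℕ}
    (hswap : T2.entry = swapEntry α T1 i) :
    colWord α T2 = (colWord α T1).map (swapFn i) := by
  rw [colWord, colWord, List.map_flatMap]
  congr 1
  funext c
  rw [colList, colList, List.map_filterMap]
  congr 1
  funext r
  split_ifs with h
  · simp only [Option.map_some]
    congr 1
    rw [hswap]
    rfl
  · rfl

private lemma getD_le_maxPart {α : List ℕ} {r : ℕ} (h : r < α.length) :
    α.getD r 0 ≤ maxPart α := by
  induction α generalizing r with
  | nil => simp at h
  | cons a l ih =>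
    cases r with
    | zero => simp [maxPart]
    | succ r =>
      simp only [List.length_cons, Nat.succ_lt_succ_iff] at h
      calc (a :: l).getD (r+1) 0 = l.getD r 0 := rfl
        _ ≤ maxPart l := ih h
        _ ≤ maxPart (a :: l) := le_max_right _ _

private lemma invFinset_map_swap {w : List ℕ} {i p q : ℕ} (hq : q < w.length) (hpq : p < q)
    (hwp : w[p]'(lt_trans hpq hq) = i) (hwq : w[q] = i + 1)
    (hip : ∀ k (hk : k < w.length), w[k] = i → k = p)
    (hiq : ∀ k (hk : k < w.length), w[k] = i + 1 → k = q) :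
    invFinset (w.map (swapFn i)) = insert (p, q) (invFinset w) := by
  have hp : p < w.length := lt_trans hpq hq
  ext ⟨a, b⟩
  simp only [invFinset, Finset.mem_filter, Finset.mem_product, Finset.mem_range,
    Finset.mem_insert, Prod.mk.injEq, List.length_map]
  constructor
  · rintro ⟨⟨ha, hb⟩, hab, hlt⟩
    rw [List.getD_eq_getElem _ _ (by simpa using hb), List.getD_eq_getElem _ _ (by simpa using ha),
      List.getElem_map, List.getElem_map] at hlt
    by_cases hcase : a = p ∧ b = q
    · exact Or.inl hcase
    · refine Or.inr ⟨⟨ha, hb⟩, hab, ?_⟩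
      rw [List.getD_eq_getElem _ _ hb, List.getD_eq_getElem _ _ ha]
      have h1 : ¬ (w[a] = i ∧ w[b] = i + 1) := fun ⟨x1, x2⟩ => hcase ⟨hip a ha x1, hiq b hb x2⟩
      have h2 : ¬ (w[b] = i ∧ w[a] = i + 1) := fun ⟨x1, x2⟩ => by
        have := hip b hb x1; have := hiq a ha x2; omega
      simp only [swapFn] at hlt
      split_ifs at hlt <;> omega
  · rintro (⟨hap, hbq⟩ | ⟨⟨ha, hb⟩, hab, hlt⟩)
    · subst hap; subst hbq
      refine ⟨⟨hp, hq⟩, hpq, ?_⟩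
      rw [List.getD_eq_getElem _ _ (by simpa using hq), List.getD_eq_getElem _ _ (by simpa using hp),
        List.getElem_map, List.getElem_map, hwp, hwq]
      simp [swapFn]
    · refine ⟨⟨ha, hb⟩, hab, ?_⟩
      rw [List.getD_eq_getElem _ _ hb, List.getD_eq_getElem _ _ ha] at hlt
      rw [List.getD_eq_getElem _ _ (by simpa using hb), List.getD_eq_getElem _ _ (by simpa using ha),
        List.getElem_map, List.getElem_map]
      have h1 : ¬ (w[a] = i ∧ w[b] = i + 1) := fun ⟨x1, x2⟩ => by
        rw [x1, x2] at hlt; omega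
      have h2 : ¬ (w[b] = i ∧ w[a] = i + 1) := fun ⟨x1, x2⟩ => by
        have := hip b hb x1; have := hiq a ha x2; omega
      simp only [swapFn]
      split_ifs <;> omega

/-- A flip at a non-attacking descent increases the Coxeter length of the column word by
exactly one, and goes up in the left weak Bruhat order (inversion sets of one-line words). -/
theorem flip_length_and_weak_order (n : ℕ) (α : List ℕ) (hpos : ∀ a ∈ α, 0 < a)
    (hsum : α.sum = n) (T1 T2 : SRCT α) (i : ℕ)
    (hd : Descent α T1 i) (hna : ¬ Attacking α T1 i)
    (hswap : T2.entry = swapEntry α T1 i) :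
    invCount (colWord α T2) = invCount (colWord α T1) + 1 ∧
    invFinset (colWord α T1) ⊆ invFinset (colWord α T2) := by
  obtain ⟨r, c, r', c', hcell, hcell', he, he', hcc'⟩ := hd
  have hne : c' ≠ c := fun h => hna ⟨r, c, r', c', hcell, hcell', he, he', Or.inl h⟩
  have hclt : c < c' := lt_of_le_of_ne hcc' (Ne.symm hne)
  set m := maxPart α with hm
  have hc'm : c' < m := lt_of_lt_of_le hcell'.2 (getD_le_maxPart hcell'.1)
  have hmeq : m = (c + 1) + (m - (c + 1)) := by omega
  set A := (List.range (c+1)).flatMap (colList α T1) with hA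
  set B := ((List.range (m - (c+1))).map (fun x => (c+1) + x)).flatMap (colList α T1) with hB
  have hW : colWord α T1 = A ++ B := by
    rw [colWord, ← hm, hmeq, List.range_add, List.flatMap_append]
  have hiA : i ∈ A := by
    rw [hA, List.mem_flatMap]
    exact ⟨c, List.mem_range.mpr (Nat.lt_succ_self c), mem_colList_iff.mpr ⟨r, hcell, he⟩⟩
  have hiB : i + 1 ∈ B := by
    rw [hB, List.mem_flatMap]
    refine ⟨c', ?_, mem_colList_iff.mpr ⟨r', hcell', he'⟩⟩
    simp only [List.mem_map, List.mem_range]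
    exact ⟨c' - (c+1), by omega, by omega⟩
  obtain ⟨p, hp, hAp⟩ := List.mem_iff_getElem.mp hiA
  obtain ⟨q0, hq0, hBq⟩ := List.mem_iff_getElem.mp hiB
  have hlen : (A ++ B).length = A.length + B.length := List.length_append
  have hq : A.length + q0 < (A ++ B).length := by omega
  have hpw : p < (A ++ B).length := by omega
  have hpq : p < A.length + q0 := by omega
  have hwp : (A ++ B)[p]'hpw = i := by
    rw [List.getElem_append_left hp]; exact hAp
  have hwq : (A ++ B)[A.length + q0]'hq = i + 1 := by
    rw [List.getElem_append_right (by omega)]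
    have h5 : A.length + q0 - A.length = q0 := by omega
    simp only [h5]
    exact hBq
  have hnd : (A ++ B).Nodup := hW ▸ nodup_colWord
  have hip : ∀ k (hk : k < (A ++ B).length), (A ++ B)[k] = i → k = p := fun k hk h =>
    (List.Nodup.getElem_inj_iff hnd).mp (h.trans hwp.symm)
  have hiq : ∀ k (hk : k < (A ++ B).length), (A ++ B)[k] = i + 1 → k = A.length + q0 :=
    fun k hk h => (List.Nodup.getElem_inj_iff hnd).mp (h.trans hwq.symm)
  have hkey := invFinset_map_swap hq hpq hwp hwq hip hiq
  have hmap : colWord α T2 = (A ++ B).map (swapFn i) := by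
    rw [colWord_swap hswap, hW]
  have hnotmem : (p, A.length + q0) ∉ invFinset (A ++ B) := by
    simp only [invFinset, Finset.mem_filter, Finset.mem_product, Finset.mem_range, not_and]
    intro _ _
    rw [List.getD_eq_getElem _ _ hq, List.getD_eq_getElem _ _ hpw, hwp, hwq]
    omega
  constructor
  · rw [invCount, invCount, hmap, hW, hkey, Finset.card_insert_of_notMem hnotmem]
  · rw [hmap, hW, hkey]
    exact Finset.subset_insert _ _
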